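/- The Fresnel integrals C(x) = (1/√(2π)) ∫_0^x cos(t)/√t dt and S(x) = (1/√(2π)) ∫_0^x sin(t)/√t dt converge as x → ∞, and C(∞) + i S(∞) = e^{iπ/4}/√2. -/

import Mathlib

open Filter Real Complex MeasureTheory Topology

noncomputable def fA (u : ℝ) : ℝ := Real.arctan (Real.sqrt 2 * u + 1) + Real.arctan (Real.sqrt 2 * u - 1)
noncomputable def fL (u : ℝ) : ℝ := Real.log ((u^2 + Real.sqrt 2 * u + 1) / (u^2 - Real.sqrt 2 * u + 1))

lemma Ppos (u : ℝ) : 0 < u^2 - Real.sqrt 2 * u + 1 := by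
  have h : u^2 - Real.sqrt 2 * u + 1 = (u - Real.sqrt 2 / 2)^2 + 1/2 := by
    have : Real.sqrt 2 ^ 2 = 2 := Real.sq_sqrt (by norm_num)
    ring_nf
    nlinarith [this]
  nlinarith [sq_nonneg (u - Real.sqrt 2 / 2)]

lemma Qpos (u : ℝ) : 0 < u^2 + Real.sqrt 2 * u + 1 := by
  have := Ppos (-u); nlinarith [this]

lemma qpos (u : ℝ) : 0 < 1 + u^4 := by positivity

lemma fA_deriv (u : ℝ) : HasDerivAt fA (Real.sqrt 2 * (u^2 + 1) / (1 + u^4)) u := by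
  have s2 : Real.sqrt 2 ^ 2 = 2 := Real.sq_sqrt (by norm_num)
  have h1 : HasDerivAt (fun u : ℝ => Real.sqrt 2 * u + 1) (Real.sqrt 2) u := by
    simpa using ((hasDerivAt_id u).const_mul (Real.sqrt 2)).add_const 1
  have h2 : HasDerivAt (fun u : ℝ => Real.sqrt 2 * u - 1) (Real.sqrt 2) u := by
    simpa using ((hasDerivAt_id u).const_mul (Real.sqrt 2)).sub_const 1
  have a1 := (Real.hasDerivAt_arctan (Real.sqrt 2 * u + 1)).comp u h1
  have a2 := (Real.hasDerivAt_arctan (Real.sqrt 2 * u - 1)).comp u h2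
  have := a1.add a2
  refine this.congr_deriv ?_; symm
  have e1 : 1 + (Real.sqrt 2 * u + 1)^2 = 2 * (u^2 + Real.sqrt 2 * u + 1) := by nlinarith [s2]
  have e2 : 1 + (Real.sqrt 2 * u - 1)^2 = 2 * (u^2 - Real.sqrt 2 * u + 1) := by nlinarith [s2]
  rw [e1, e2]
  have hP := (Ppos u).ne'
  have hQ := (Qpos u).ne'
  have hq : (u^2 + Real.sqrt 2 * u + 1) * (u^2 - Real.sqrt 2 * u + 1) = 1 + u^4 := by nlinarith [s2]
  rw [← hq]
  generalize hQd : u^2 + Real.sqrt 2 * u + 1 = Q at hQ ⊢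
  generalize hPd : u^2 - Real.sqrt 2 * u + 1 = P at hP ⊢
  field_simp
  subst hQd hPd
  ring

lemma fL_deriv (u : ℝ) : HasDerivAt fL (2 * Real.sqrt 2 * (1 - u^2) / (1 + u^4)) u := by
  have s2 : Real.sqrt 2 ^ 2 = 2 := Real.sq_sqrt (by norm_num)
  have hP := Ppos u
  have hQ := Qpos u
  have hq : (u^2 + Real.sqrt 2 * u + 1) * (u^2 - Real.sqrt 2 * u + 1) = 1 + u^4 := by nlinarith [s2]
  have dQ : HasDerivAt (fun u : ℝ => u^2 + Real.sqrt 2 * u + 1) (2*u + Real.sqrt 2) u := by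
    have := ((hasDerivAt_pow 2 u).add (((hasDerivAt_id u).const_mul (Real.sqrt 2)))).add_const 1
    simpa using this
  have dP : HasDerivAt (fun u : ℝ => u^2 - Real.sqrt 2 * u + 1) (2*u - Real.sqrt 2) u := by
    have := ((hasDerivAt_pow 2 u).sub (((hasDerivAt_id u).const_mul (Real.sqrt 2)))).add_const 1
    simpa using this
  have lQ := (Real.hasDerivAt_log hQ.ne').comp u dQ
  have lP := (Real.hasDerivAt_log hP.ne').comp u dP
  have hfl : fL = fun u : ℝ => Real.log (u^2 + Real.sqrt 2 * u + 1) - Real.log (u^2 - Real.sqrt 2 * u + 1) := by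
    funext v
    exact Real.log_div (Qpos v).ne' (Ppos v).ne'
  rw [hfl]
  have := lQ.sub lP
  refine this.congr_deriv ?_; symm
  rw [← hq]
  generalize hQd : u^2 + Real.sqrt 2 * u + 1 = Q at hQ ⊢
  generalize hPd : u^2 - Real.sqrt 2 * u + 1 = P at hP ⊢
  field_simp
  subst hQd hPd
  ring

lemma fA_zero : fA 0 = 0 := by
  simp [fA, Real.arctan_neg]

lemma fL_zero : fL 0 = 0 := by
  simp [fL]

lemma fA_lim : Tendsto fA atTop (𝓝 π) := by
  have h := tendsto_nhds_of_tendsto_nhdsWithin Real.tendsto_arctan_atTop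
  have l1 : Tendsto (fun u : ℝ => Real.sqrt 2 * u + 1) atTop atTop := by
    apply Tendsto.atTop_add _ tendsto_const_nhds
    exact Tendsto.const_mul_atTop (Real.sqrt_pos.mpr (by norm_num)) tendsto_id
  have l2 : Tendsto (fun u : ℝ => Real.sqrt 2 * u - 1) atTop atTop := by
    apply Tendsto.atTop_add (Tendsto.const_mul_atTop (Real.sqrt_pos.mpr (by norm_num)) tendsto_id)
      tendsto_const_nhds
  have := (h.comp l1).add (h.comp l2)
  have hπ : π / 2 + π / 2 = π := by ring
  rw [hπ] at this
  exact this

lemma fL_lim : Tendsto fL atTop (𝓝 0) := by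
  have hratio : Tendsto (fun u : ℝ => (u^2 + Real.sqrt 2 * u + 1) / (u^2 - Real.sqrt 2 * u + 1))
      atTop (𝓝 1) := by
    have hinv : Tendsto (fun u : ℝ => u⁻¹) atTop (𝓝 (0:ℝ)) := tendsto_inv_atTop_zero
    have hnum : Tendsto (fun u : ℝ => 1 + Real.sqrt 2 * u⁻¹ + (u⁻¹)^2) atTop (𝓝 1) := by
      have : Tendsto (fun u : ℝ => 1 + Real.sqrt 2 * u⁻¹ + (u⁻¹)^2) atTop
          (𝓝 (1 + Real.sqrt 2 * 0 + 0^2)) := by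
        exact (tendsto_const_nhds.add (hinv.const_mul _)).add (hinv.pow 2)
      simpa using this
    have hden : Tendsto (fun u : ℝ => 1 - Real.sqrt 2 * u⁻¹ + (u⁻¹)^2) atTop (𝓝 1) := by
      have : Tendsto (fun u : ℝ => 1 - Real.sqrt 2 * u⁻¹ + (u⁻¹)^2) atTop
          (𝓝 (1 - Real.sqrt 2 * 0 + 0^2)) := by
        exact (tendsto_const_nhds.sub (hinv.const_mul _)).add (hinv.pow 2)
      simpa using this
    have := hnum.div hden one_ne_zero
    rw [div_one] at this
    refine this.congr' ?_
    filter_upwards [eventually_gt_atTop (0:ℝ)] with u hu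
    simp only [Pi.div_apply]
    have hden0 : 1 - Real.sqrt 2 * u⁻¹ + (u⁻¹)^2 = (u^2 - Real.sqrt 2*u + 1)/u^2 := by
      field_simp
    have hdpos : 0 < 1 - Real.sqrt 2 * u⁻¹ + (u⁻¹)^2 := by
      rw [hden0]; exact div_pos (Ppos u) (by positivity)
    rw [div_eq_div_iff hdpos.ne' (Ppos u).ne']
    field_simp
  have hcont : Tendsto Real.log (𝓝 1) (𝓝 0) := by
    simpa using (Real.continuousAt_log one_ne_zero).tendsto
  exact hcont.comp hratio

lemma intOn_inv_q : IntegrableOn (fun u : ℝ => 1 / (1 + u^4)) (Set.Ioi 0) := by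
  refine Integrable.integrableOn ?_
  refine (integrable_inv_one_add_sq.const_mul 2).mono' ?_ ?_
  · exact (continuous_const.div (by continuity) (fun u => (qpos u).ne')).aestronglyMeasurable
  · refine Eventually.of_forall fun u => ?_
    have h1 : (0:ℝ) < 1 + u^2 := by positivity
    rw [Real.norm_eq_abs, _root_.abs_of_nonneg (by positivity), inv_eq_one_div, mul_one_div,
      div_le_div_iff₀ (qpos u) h1]
    nlinarith [sq_nonneg (u^2-1), sq_nonneg u]

lemma intOn_sq_q : IntegrableOn (fun u : ℝ => u^2 / (1 + u^4)) (Set.Ioi 0) := by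
  refine Integrable.integrableOn ?_
  refine (integrable_inv_one_add_sq.const_mul 2).mono' ?_ ?_
  · exact ((continuous_pow 2).div (by continuity) (fun u => (qpos u).ne')).aestronglyMeasurable
  · refine Eventually.of_forall fun u => ?_
    have h1 : (0:ℝ) < 1 + u^2 := by positivity
    rw [Real.norm_eq_abs, _root_.abs_of_nonneg (by positivity), inv_eq_one_div, mul_one_div,
      div_le_div_iff₀ (qpos u) h1]
    nlinarith [sq_nonneg (u^2-1), sq_nonneg u]

lemma sqrt2_pos : (0:ℝ) < Real.sqrt 2 := Real.sqrt_pos.mpr (by norm_num)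

lemma J0 : ∫ u in Set.Ioi (0:ℝ), 1 / (1 + u^4) = π / (2 * Real.sqrt 2) := by
  have hderiv : ∀ u ∈ Set.Ici (0:ℝ),
      HasDerivAt (fun v => (fL v + 2 * fA v) / (4 * Real.sqrt 2)) (1 / (1 + u^4)) u := by
    intro u _
    have := ((fL_deriv u).add ((fA_deriv u).const_mul 2)).div_const (4 * Real.sqrt 2)
    refine this.congr_deriv ?_; symm
    have s2 : Real.sqrt 2 * Real.sqrt 2 = 2 := Real.mul_self_sqrt (by norm_num)
    field_simp
    ring_nf
  have hlim : Tendsto (fun v => (fL v + 2 * fA v) / (4 * Real.sqrt 2)) atTop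
      (𝓝 ((0 + 2 * π) / (4 * Real.sqrt 2))) :=
    (fL_lim.add (fA_lim.const_mul 2)).div_const _
  have := integral_Ioi_of_hasDerivAt_of_tendsto' hderiv intOn_inv_q hlim
  rw [this, fL_zero, fA_zero]
  have s2 : Real.sqrt 2 * Real.sqrt 2 = 2 := Real.mul_self_sqrt (by norm_num)
  field_simp
  ring

lemma J2 : ∫ u in Set.Ioi (0:ℝ), u^2 / (1 + u^4) = π / (2 * Real.sqrt 2) := by
  have hderiv : ∀ u ∈ Set.Ici (0:ℝ),
      HasDerivAt (fun v => (2 * fA v - fL v) / (4 * Real.sqrt 2)) (u^2 / (1 + u^4)) u := by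
    intro u _
    have := (((fA_deriv u).const_mul 2).sub (fL_deriv u)).div_const (4 * Real.sqrt 2)
    refine this.congr_deriv ?_; symm
    have s2 : Real.sqrt 2 * Real.sqrt 2 = 2 := Real.mul_self_sqrt (by norm_num)
    field_simp
    ring_nf
  have hlim : Tendsto (fun v => (2 * fA v - fL v) / (4 * Real.sqrt 2)) atTop
      (𝓝 ((2 * π - 0) / (4 * Real.sqrt 2))) :=
    ((fA_lim.const_mul 2).sub fL_lim).div_const _
  have := integral_Ioi_of_hasDerivAt_of_tendsto' hderiv intOn_sq_q hlim
  rw [this, fL_zero, fA_zero]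
  have s2 : Real.sqrt 2 * Real.sqrt 2 = 2 := Real.mul_self_sqrt (by norm_num)
  field_simp
  ring

lemma inner_cos (u x : ℝ) : ∫ t in (0:ℝ)..x, Real.exp (-(t*u^2)) * Real.cos t
    = (u^2 + Real.exp (-(x*u^2)) * (Real.sin x - u^2 * Real.cos x)) / (1 + u^4) := by
  have key : ∀ t : ℝ, HasDerivAt
      (fun t => Real.exp (-(t*u^2)) * (Real.sin t - u^2 * Real.cos t) / (1 + u^4))
      (Real.exp (-(t*u^2)) * Real.cos t) t := by
    intro t
    have h1 : HasDerivAt (fun t : ℝ => -(t*u^2)) (-(u^2)) t := by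
      exact (hasDerivAt_mul_const (u^2)).neg
    have h2 := (Real.hasDerivAt_exp (-(t*u^2))).comp t h1
    have h3 : HasDerivAt (fun t : ℝ => Real.sin t - u^2 * Real.cos t)
        (Real.cos t + u^2 * Real.sin t) t := by
      have := (Real.hasDerivAt_sin t).sub ((Real.hasDerivAt_cos t).const_mul (u^2))
      refine this.congr_deriv ?_; ring
    have := (h2.mul h3).div_const (1 + u^4)
    refine this.congr_deriv ?_; symm
    simp only [Function.comp_apply]
    field_simp
    ring
  have := intervalIntegral.integral_eq_sub_of_hasDerivAt (fun t _ => key t)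
    (Continuous.intervalIntegrable (by continuity) 0 x)
  rw [this]
  rw [Real.sin_zero, Real.cos_zero, zero_mul, neg_zero, Real.exp_zero]
  have hq := (qpos u).ne'
  field_simp
  ring

lemma inner_sin (u x : ℝ) : ∫ t in (0:ℝ)..x, Real.exp (-(t*u^2)) * Real.sin t
    = (1 - Real.exp (-(x*u^2)) * (Real.cos x + u^2 * Real.sin x)) / (1 + u^4) := by
  have key : ∀ t : ℝ, HasDerivAt
      (fun t => -(Real.exp (-(t*u^2)) * (Real.cos t + u^2 * Real.sin t)) / (1 + u^4))
      (Real.exp (-(t*u^2)) * Real.sin t) t := by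
    intro t
    have h1 : HasDerivAt (fun t : ℝ => -(t*u^2)) (-(u^2)) t := by
      exact (hasDerivAt_mul_const (u^2)).neg
    have h2 := (Real.hasDerivAt_exp (-(t*u^2))).comp t h1
    have h3 : HasDerivAt (fun t : ℝ => Real.cos t + u^2 * Real.sin t)
        (-Real.sin t + u^2 * Real.cos t) t := by
      have := (Real.hasDerivAt_cos t).add ((Real.hasDerivAt_sin t).const_mul (u^2))
      exact this
    have := ((h2.mul h3).neg).div_const (1 + u^4)
    refine this.congr_deriv ?_; symm
    simp only [Function.comp_apply]
    field_simp
    ring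
  have := intervalIntegral.integral_eq_sub_of_hasDerivAt (fun t _ => key t)
    (Continuous.intervalIntegrable (by continuity) 0 x)
  rw [this]
  rw [Real.sin_zero, Real.cos_zero, zero_mul, neg_zero, Real.exp_zero]
  have hq := (qpos u).ne'
  field_simp
  ring

lemma gauss_Ioi (t : ℝ) (ht : 0 < t) :
    ∫ u in Set.Ioi (0:ℝ), Real.exp (-(t*u^2)) = Real.sqrt π / Real.sqrt t / 2 := by
  have := integral_gaussian_Ioi t
  simp_rw [neg_mul] at this
  rw [this, Real.sqrt_div Real.pi_pos.le]

lemma fubini_gen (trig : ℝ → ℝ) (htrig : Continuous trig) (hb : ∀ t, |trig t| ≤ 1)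
    (x : ℝ) (hx : 0 < x) :
    ∫ t in Set.Ioc (0:ℝ) x, trig t / Real.sqrt t
    = (2 / Real.sqrt π) *
      ∫ u in Set.Ioi (0:ℝ), (∫ t in Set.Ioc (0:ℝ) x, Real.exp (-(t*u^2)) * trig t) := by
  have hπ : (0:ℝ) < Real.sqrt π := Real.sqrt_pos.mpr Real.pi_pos
  set f : ℝ → ℝ → ℝ := fun t u => Real.exp (-(t*u^2)) * trig t with hf
  have hcont : Continuous (Function.uncurry f) := by
    apply Continuous.mul
    · exact Real.continuous_exp.comp (by continuity)
    · exact htrig.comp continuous_fst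
  -- integrability of the dominating function t ↦ √π/(2 √t) on Ioc 0 x
  have hdom : IntegrableOn (fun t : ℝ => Real.sqrt π / Real.sqrt t / 2) (Set.Ioc 0 x) := by
    have h1 : IntervalIntegrable (fun t : ℝ => t ^ (-(1:ℝ)/2)) MeasureTheory.volume 0 x :=
      intervalIntegral.intervalIntegrable_rpow' (by norm_num)
    rw [intervalIntegrable_iff_integrableOn_Ioc_of_le hx.le] at h1
    refine ((h1.const_mul (Real.sqrt π / 2)).congr ?_)
    filter_upwards [MeasureTheory.ae_restrict_mem measurableSet_Ioc] with t ht
    have h2 : t ^ (-1/2 : ℝ) = (Real.sqrt t)⁻¹ := by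
      rw [Real.sqrt_eq_rpow, ← Real.rpow_neg ht.1.le]; norm_num
    rw [h2]
    field_simp
  -- product integrability
  have hint : Integrable (Function.uncurry f)
      ((volume.restrict (Set.Ioc 0 x)).prod (volume.restrict (Set.Ioi 0))) := by
    rw [MeasureTheory.integrable_prod_iff hcont.aestronglyMeasurable]
    constructor
    · filter_upwards [ae_restrict_mem measurableSet_Ioc] with t ht
      have : Integrable (fun u : ℝ => Real.exp (-(t*u^2))) := by
        simpa [neg_mul] using integrable_exp_neg_mul_sq ht.1
      exact ((this.mul_const (trig t)).restrict)
    · refine hdom.mono' ?_ ?_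
      · exact (hcont.aestronglyMeasurable.norm).integral_prod_right'
      · filter_upwards [ae_restrict_mem measurableSet_Ioc] with t ht
        have hg := gauss_Ioi t ht.1
        have hIg : Integrable (fun u : ℝ => Real.exp (-(t*u^2))) := by
          simpa [neg_mul] using integrable_exp_neg_mul_sq ht.1
        have h1 : ∫ u in Set.Ioi (0:ℝ), ‖f t u‖
            = |trig t| * ∫ u in Set.Ioi (0:ℝ), Real.exp (-(t*u^2)) := by
          rw [← MeasureTheory.integral_const_mul]
          congr 1; funext u
          rw [hf]; simp [norm_mul, Real.abs_exp, abs_mul, mul_comm]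
        simp only [Function.uncurry_apply_pair]
        rw [Real.norm_eq_abs, _root_.abs_of_nonneg (by positivity), h1, hg]
        have := hb t
        have hpos : 0 ≤ Real.sqrt π / Real.sqrt t / 2 := by positivity
        nlinarith [abs_nonneg (trig t)]
  have swap := MeasureTheory.integral_integral_swap hint
  -- LHS rewrite
  have lhs_eq : ∫ t in Set.Ioc (0:ℝ) x, trig t / Real.sqrt t
      = (2 / Real.sqrt π) * ∫ t in Set.Ioc (0:ℝ) x, (∫ u in Set.Ioi (0:ℝ), f t u) := by
    rw [← MeasureTheory.integral_const_mul]
    refine MeasureTheory.setIntegral_congr_fun measurableSet_Ioc ?_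
    intro t ht
    have hg := gauss_Ioi t ht.1
    have h1 : ∫ u in Set.Ioi (0:ℝ), f t u
        = trig t * ∫ u in Set.Ioi (0:ℝ), Real.exp (-(t*u^2)) := by
      rw [← MeasureTheory.integral_const_mul]
      congr 1; funext u; rw [hf]; ring
    show trig t / Real.sqrt t = (2 / Real.sqrt π) * ∫ u in Set.Ioi (0:ℝ), f t u
    rw [h1, hg]
    have hst : (0:ℝ) < Real.sqrt t := Real.sqrt_pos.mpr ht.1
    field_simp
  rw [lhs_eq, swap]

lemma rem_ptbound (x a b u : ℝ) (ha : |a| ≤ 1) (hb : |b| ≤ 1) :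
    ‖Real.exp (-(x*u^2)) * (a + u^2*b) / (1+u^4)‖ ≤ 2 * Real.exp (-(x*u^2)) := by
  have hq := qpos u
  have he : (0:ℝ) < Real.exp (-(x*u^2)) := Real.exp_pos _
  rw [Real.norm_eq_abs, abs_div, _root_.abs_of_pos hq, abs_mul, Real.abs_exp]
  rw [div_le_iff₀ hq]
  have h1 : |a + u^2*b| ≤ 1 + u^2 := by
    calc |a + u^2*b| ≤ |a| + |u^2*b| := abs_add_le _ _
    _ ≤ 1 + u^2 := by
        rw [abs_mul, _root_.abs_of_nonneg (sq_nonneg u)]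
        nlinarith [sq_nonneg u, abs_nonneg b]
  have h2 : 1 + u^2 ≤ 2 * (1 + u^4) := by nlinarith [sq_nonneg (u^2-1), sq_nonneg u]
  nlinarith [he.le, mul_le_mul_of_nonneg_left h1 he.le]

lemma rem_gauss_int (x : ℝ) (hx : 0 < x) :
    Integrable (fun u : ℝ => 2 * Real.exp (-(x*u^2))) := by
  simpa [neg_mul] using (integrable_exp_neg_mul_sq hx).const_mul 2

lemma rem_intOn (x a b : ℝ) (hx : 0 < x) (ha : |a| ≤ 1) (hb : |b| ≤ 1) :
    IntegrableOn (fun u : ℝ => Real.exp (-(x*u^2)) * (a + u^2*b) / (1+u^4)) (Set.Ioi 0) := by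
  refine ((rem_gauss_int x hx).restrict).mono' ?_ ?_
  · apply Continuous.aestronglyMeasurable
    apply Continuous.div
    · exact (Real.continuous_exp.comp (by continuity)).mul (by continuity)
    · continuity
    · exact fun u => (qpos u).ne'
  · exact Eventually.of_forall fun u => rem_ptbound x a b u ha hb

lemma rem_norm (x a b : ℝ) (hx : 0 < x) (ha : |a| ≤ 1) (hb : |b| ≤ 1) :
    ‖∫ u in Set.Ioi (0:ℝ), Real.exp (-(x*u^2)) * (a + u^2*b) / (1+u^4)‖
      ≤ Real.sqrt π / Real.sqrt x := by
  have h := MeasureTheory.norm_integral_le_of_norm_le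
    (μ := volume.restrict (Set.Ioi 0))
    (f := fun u : ℝ => Real.exp (-(x*u^2)) * (a + u^2*b) / (1+u^4))
    ((rem_gauss_int x hx).restrict)
    (Eventually.of_forall fun u => rem_ptbound x a b u ha hb)
  refine h.trans ?_
  rw [MeasureTheory.integral_const_mul, gauss_Ioi x hx]
  ring_nf
  exact le_refl _

lemma cos_val (x : ℝ) (hx : 0 < x) :
    ∫ t in (0:ℝ)..x, Real.cos t / Real.sqrt t
    = (2 / Real.sqrt π) * (π / (2 * Real.sqrt 2) +
        ∫ u in Set.Ioi (0:ℝ), Real.exp (-(x*u^2)) * (Real.sin x + u^2 * (-Real.cos x)) / (1+u^4)) := by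
  rw [intervalIntegral.integral_of_le hx.le,
    fubini_gen Real.cos Real.continuous_cos (fun t => Real.abs_cos_le_one t) x hx]
  congr 1
  have step : ∫ u in Set.Ioi (0:ℝ), (∫ t in Set.Ioc (0:ℝ) x, Real.exp (-(t*u^2)) * Real.cos t)
      = ∫ u in Set.Ioi (0:ℝ), (u^2/(1+u^4)
        + Real.exp (-(x*u^2)) * (Real.sin x + u^2 * (-Real.cos x)) / (1+u^4)) := by
    refine MeasureTheory.setIntegral_congr_fun measurableSet_Ioi fun u _ => ?_
    rw [← intervalIntegral.integral_of_le hx.le, inner_cos]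
    ring
  rw [step, MeasureTheory.integral_add intOn_sq_q
    (rem_intOn x (Real.sin x) (-Real.cos x) hx (Real.abs_sin_le_one x)
      (by rw [abs_neg]; exact Real.abs_cos_le_one x)), J2]

lemma sin_val (x : ℝ) (hx : 0 < x) :
    ∫ t in (0:ℝ)..x, Real.sin t / Real.sqrt t
    = (2 / Real.sqrt π) * (π / (2 * Real.sqrt 2) +
        ∫ u in Set.Ioi (0:ℝ), Real.exp (-(x*u^2)) * (-Real.cos x + u^2 * (-Real.sin x)) / (1+u^4)) := by
  rw [intervalIntegral.integral_of_le hx.le,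
    fubini_gen Real.sin Real.continuous_sin (fun t => Real.abs_sin_le_one t) x hx]
  congr 1
  have step : ∫ u in Set.Ioi (0:ℝ), (∫ t in Set.Ioc (0:ℝ) x, Real.exp (-(t*u^2)) * Real.sin t)
      = ∫ u in Set.Ioi (0:ℝ), (1/(1+u^4)
        + Real.exp (-(x*u^2)) * (-Real.cos x + u^2 * (-Real.sin x)) / (1+u^4)) := by
    refine MeasureTheory.setIntegral_congr_fun measurableSet_Ioi fun u _ => ?_
    rw [← intervalIntegral.integral_of_le hx.le, inner_sin]
    ring
  rw [step, MeasureTheory.integral_add intOn_inv_q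
    (rem_intOn x (-Real.cos x) (-Real.sin x) hx
      (by rw [abs_neg]; exact Real.abs_cos_le_one x)
      (by rw [abs_neg]; exact Real.abs_sin_le_one x)), J0]

lemma bound_tendsto : Tendsto (fun x : ℝ => Real.sqrt π / Real.sqrt x) atTop (𝓝 0) := by
  have hs : Tendsto Real.sqrt atTop atTop :=
    (tendsto_rpow_atTop (by norm_num : (0:ℝ) < 1/2)).congr fun x => (Real.sqrt_eq_rpow x).symm
  simpa [div_eq_mul_inv] using (tendsto_inv_atTop_zero.comp hs).const_mul (Real.sqrt π)

lemma const_half : (1 / Real.sqrt (2*π)) * ((2 / Real.sqrt π) * (π / (2 * Real.sqrt 2) + 0)) = 1/2 := by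
  have h2 : Real.sqrt 2 * Real.sqrt 2 = 2 := Real.mul_self_sqrt (by norm_num)
  have hπ : Real.sqrt π * Real.sqrt π = π := Real.mul_self_sqrt Real.pi_pos.le
  have h2π : Real.sqrt (2*π) = Real.sqrt 2 * Real.sqrt π := Real.sqrt_mul (by norm_num) π
  rw [add_zero, h2π]
  have hπ0 : (0:ℝ) < Real.sqrt π := Real.sqrt_pos.mpr Real.pi_pos
  field_simp
  nlinarith [h2, hπ, sqrt2_pos, hπ0]

theorem stmt15
    (C S : ℝ → ℝ)
    (hC : ∀ x : ℝ, C x = (1 / Real.sqrt (2 * π)) * ∫ t in (0:ℝ)..x, Real.cos t / Real.sqrt t)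
    (hS : ∀ x : ℝ, S x = (1 / Real.sqrt (2 * π)) * ∫ t in (0:ℝ)..x, Real.sin t / Real.sqrt t) :
    ∃ Ci Si : ℝ, Tendsto C atTop (nhds Ci) ∧ Tendsto S atTop (nhds Si) ∧
      ((Ci : ℂ) + (Si : ℂ) * Complex.I) = Complex.exp (((π / 4 : ℝ) : ℂ) * Complex.I) / (Real.sqrt 2 : ℂ) := by
  refine ⟨1/2, 1/2, ?_, ?_, ?_⟩
  · -- C tends to 1/2
    have hR : Tendsto (fun x : ℝ => ∫ u in Set.Ioi (0:ℝ),
        Real.exp (-(x*u^2)) * (Real.sin x + u^2 * (-Real.cos x)) / (1+u^4)) atTop (𝓝 0) := by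
      refine squeeze_zero_norm' ?_ bound_tendsto
      filter_upwards [eventually_gt_atTop (0:ℝ)] with x hx
      exact rem_norm x (Real.sin x) (-Real.cos x) hx (Real.abs_sin_le_one x)
        (by rw [abs_neg]; exact Real.abs_cos_le_one x)
    have hT : Tendsto (fun x : ℝ => (1 / Real.sqrt (2*π)) * ((2 / Real.sqrt π) *
        (π / (2 * Real.sqrt 2) + (∫ u in Set.Ioi (0:ℝ),
          Real.exp (-(x*u^2)) * (Real.sin x + u^2 * (-Real.cos x)) / (1+u^4))))) atTop
        (𝓝 ((1 / Real.sqrt (2*π)) * ((2 / Real.sqrt π) * (π / (2 * Real.sqrt 2) + 0)))) :=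
      (((tendsto_const_nhds.add hR).const_mul _).const_mul _)
    rw [const_half] at hT
    refine hT.congr' ?_
    filter_upwards [eventually_gt_atTop (0:ℝ)] with x hx
    rw [hC x, cos_val x hx]
  · -- S tends to 1/2
    have hR : Tendsto (fun x : ℝ => ∫ u in Set.Ioi (0:ℝ),
        Real.exp (-(x*u^2)) * (-Real.cos x + u^2 * (-Real.sin x)) / (1+u^4)) atTop (𝓝 0) := by
      refine squeeze_zero_norm' ?_ bound_tendsto
      filter_upwards [eventually_gt_atTop (0:ℝ)] with x hx
      exact rem_norm x (-Real.cos x) (-Real.sin x) hx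
        (by rw [abs_neg]; exact Real.abs_cos_le_one x)
        (by rw [abs_neg]; exact Real.abs_sin_le_one x)
    have hT : Tendsto (fun x : ℝ => (1 / Real.sqrt (2*π)) * ((2 / Real.sqrt π) *
        (π / (2 * Real.sqrt 2) + (∫ u in Set.Ioi (0:ℝ),
          Real.exp (-(x*u^2)) * (-Real.cos x + u^2 * (-Real.sin x)) / (1+u^4))))) atTop
        (𝓝 ((1 / Real.sqrt (2*π)) * ((2 / Real.sqrt π) * (π / (2 * Real.sqrt 2) + 0)))) :=
      (((tendsto_const_nhds.add hR).const_mul _).const_mul _)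
    rw [const_half] at hT
    refine hT.congr' ?_
    filter_upwards [eventually_gt_atTop (0:ℝ)] with x hx
    rw [hS x, sin_val x hx]
  · -- complex identity
    rw [Complex.exp_mul_I, ← Complex.ofReal_cos, ← Complex.ofReal_sin,
      Real.cos_pi_div_four, Real.sin_pi_div_four]
    have h0 : (Real.sqrt 2 : ℂ) ≠ 0 := by
      exact_mod_cast Complex.ofReal_ne_zero.mpr sqrt2_pos.ne'
    field_simp
    push_cast
    ring
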